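/- For every integer n ≥ 1, every t > 0, every ε ∈ ℝ, and every y ∈ ℝ^n, the determinant of the n×n matrix with (i,j) entry q_t(ε·n̲_i, y_j) equals 2^{n²} · (∏_{j=1}^n φ_t(y_j)) · exp(−ε²‖n̲‖²/(2t)) · (∏_{i=1}^n sinh(ε y_i/t)) · ∏_{1 ≤ j < k ≤ n} [sinh²(ε y_j/t) − sinh²(ε y_k/t)]. -/

import Mathlib

open Finset Equiv


/-- `gauss v z` is the one-dimensional centered Gaussian density of variance `v` at `z`. -/
noncomputable def gauss (v z : ℝ) : ℝ :=
  (Real.sqrt (2 * Real.pi * v))⁻¹ * Real.exp (-z ^ 2 / (2 * v))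

/-- `q t x y` is the transition kernel of Brownian motion killed at `0`. -/
noncomputable def q (t x y : ℝ) : ℝ := gauss t (y - x) - gauss t (y + x)

/-- `nvec n i = 2(n-1-i)+1`, i.e. the vector `(2n-1, 2n-3, …, 3, 1)` (0-based index). -/
def nvec (n : ℕ) (i : Fin n) : ℝ := ((2 * (n - 1 - (i : ℕ)) + 1 : ℕ) : ℝ)


/-- coefficients of the expansion of `sinh((2m+1)x)` in odd powers of `sinh x`. -/
noncomputable def cc : ℕ → ℕ → ℝ
  | 0, 0 => 1
  | 0, _ + 1 => 0
  | 1, 0 => 3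
  | 1, 1 => 4
  | 1, _ + 2 => 0
  | m + 2, 0 => 2 * cc (m + 1) 0 - cc m 0
  | m + 2, k + 1 => 2 * cc (m + 1) (k + 1) + 4 * cc (m + 1) k - cc m (k + 1)

lemma cc_eq_zero : ∀ m k : ℕ, m < k → cc m k = 0 := by
  intro m
  induction m using Nat.twoStepInduction with
  | zero => intro k hk; match k, hk with | k+1, _ => rfl
  | one => intro k hk; match k, hk with | k+2, _ => rfl
  | more m ih ih1 =>
    intro k hk
    match k, hk with
    | k+1, hk =>
      show 2 * cc (m + 1) (k + 1) + 4 * cc (m + 1) k - cc m (k + 1) = 0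
      rw [ih1 (k+1) (by omega), ih (k+1) (by omega), ih1 k (by omega)]
      ring

lemma cc_diag : ∀ m : ℕ, cc m m = 4 ^ m := by
  intro m
  induction m using Nat.twoStepInduction with
  | zero => rfl
  | one => norm_num [cc]
  | more m ih ih1 =>
    show 2 * cc (m + 1) (m + 2) + 4 * cc (m + 1) (m + 1) - cc m (m + 2) = 4 ^ (m+2)
    rw [cc_eq_zero (m+1) (m+2) (by omega), cc_eq_zero m (m+2) (by omega), ih1]
    ring

lemma sum_cc_ext (m N : ℕ) (h : m + 1 ≤ N) (s : ℝ) :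
    ∑ k ∈ range N, cc m k * s ^ (2 * k + 1)
      = ∑ k ∈ range (m + 1), cc m k * s ^ (2 * k + 1) := by
  refine (Finset.sum_subset (by intro x hx; simp at hx ⊢; omega) ?_).symm
  intro k _ hk
  rw [cc_eq_zero m k (by simp at hk; omega), zero_mul]

lemma sinh_odd : ∀ (m : ℕ) (x : ℝ), Real.sinh (((2 * m + 1 : ℕ) : ℝ) * x)
    = ∑ k ∈ range (m + 1), cc m k * Real.sinh x ^ (2 * k + 1) := by
  intro m
  induction m using Nat.twoStepInduction with
  | zero => intro x; simp [cc]
  | one =>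
    intro x
    have h : ((2 * 1 + 1 : ℕ) : ℝ) * x = x + (x + x) := by push_cast; ring
    have hc := Real.cosh_sq x
    rw [h, Real.sinh_add, Real.sinh_add, Real.cosh_add, Finset.sum_range_succ,
      Finset.sum_range_one]
    have c0 : cc 1 0 = 3 := rfl
    have c1 : cc 1 1 = 4 := rfl
    rw [c0, c1]
    linear_combination (3 * Real.sinh x) * hc
  | more m ih ih1 =>
    intro x
    have key : Real.sinh (((2 * (m+2) + 1 : ℕ) : ℝ) * x)
        = 2 * Real.sinh (((2 * (m+1) + 1 : ℕ) : ℝ) * x) * Real.cosh (2*x)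
          - Real.sinh (((2 * m + 1 : ℕ) : ℝ) * x) := by
      have h1 : ((2 * (m+2) + 1 : ℕ) : ℝ) * x = ((2 * (m+1) + 1 : ℕ) : ℝ) * x + 2*x := by
        push_cast; ring
      have h2 : ((2 * m + 1 : ℕ) : ℝ) * x = ((2 * (m+1) + 1 : ℕ) : ℝ) * x - 2*x := by
        push_cast; ring
      rw [h1, h2, Real.sinh_add, Real.sinh_sub]; ring
    have hcosh : Real.cosh (2*x) = 2 * Real.sinh x ^ 2 + 1 := by
      rw [Real.cosh_two_mul, Real.cosh_sq]; ring
    rw [key, hcosh, ih x, ih1 x]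
    set s := Real.sinh x
    rw [Finset.sum_range_succ' (fun k => cc (m+2) k * s ^ (2*k+1)) (m+2)]
    have hrec : ∀ k : ℕ, cc (m+2) (k+1) * s ^ (2*(k+1)+1)
        = 2 * (cc (m+1) (k+1) * s ^ (2*(k+1)+1)) + (4 * s^2) * (cc (m+1) k * s ^ (2*k+1))
          - cc m (k+1) * s ^ (2*(k+1)+1) := by
      intro k
      show (2 * cc (m + 1) (k + 1) + 4 * cc (m + 1) k - cc m (k + 1)) * _ = _
      ring
    rw [Finset.sum_congr rfl (fun k _ => hrec k)]
    rw [Finset.sum_sub_distrib, Finset.sum_add_distrib, ← Finset.mul_sum, ← Finset.mul_sum]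
    show _ = 2 * ∑ k ∈ range (m+2), cc (m+1) (k+1) * s ^ (2*(k+1)+1)
        + (4*s^2) * ∑ k ∈ range (m+2), cc (m+1) k * s ^ (2*k+1)
        - ∑ k ∈ range (m+2), cc m (k+1) * s ^ (2*(k+1)+1)
        + (2 * cc (m+1) 0 - cc m 0) * s ^ (2*0+1)
    have e1 : ∑ k ∈ range (m+2), cc (m+1) (k+1) * s ^ (2*(k+1)+1)
        = (∑ k ∈ range (m+3), cc (m+1) k * s ^ (2*k+1)) - cc (m+1) 0 * s ^ (2*0+1) := by
      rw [Finset.sum_range_succ' (fun k => cc (m+1) k * s ^ (2*k+1)) (m+2)]; ring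
    have e2 : ∑ k ∈ range (m+2), cc m (k+1) * s ^ (2*(k+1)+1)
        = (∑ k ∈ range (m+3), cc m k * s ^ (2*k+1)) - cc m 0 * s ^ (2*0+1) := by
      rw [Finset.sum_range_succ' (fun k => cc m k * s ^ (2*k+1)) (m+2)]; ring
    rw [e1, e2, sum_cc_ext (m+1) (m+3) (by omega), sum_cc_ext m (m+3) (by omega)]
    ring

lemma rev_decomp (m : ℕ) : (Fin.revPerm : Equiv.Perm (Fin (m+2)))
    = Equiv.Perm.decomposeFin.symm (Fin.last (m+1), Fin.revPerm * finRotate (m+1)) := by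
  ext i
  refine Fin.cases ?_ (fun j => ?_) i
  · simp
  · rw [Equiv.Perm.decomposeFin_symm_apply_succ]
    simp only [Equiv.Perm.mul_apply, Fin.revPerm_apply, finRotate_succ_apply]
    have hval : ((j + 1 : Fin (m+1)) : ℕ) = ((j : ℕ) + 1) % (m+1) := by
      simp [Fin.add_def]
    by_cases hj : (j : ℕ) = m
    · have hx : (Fin.rev (j + 1)).succ = Fin.last (m+1) := by
        simp [Fin.ext_iff, Fin.val_rev, hval, hj]
      rw [hx, Equiv.swap_apply_right]
      simp [Fin.ext_iff, Fin.val_rev, hj]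
    · have h1 : ((j : ℕ) + 1) % (m+1) = (j : ℕ) + 1 := Nat.mod_eq_of_lt (by omega)
      have hne0 : (Fin.rev (j + 1)).succ ≠ 0 := Fin.succ_ne_zero _
      have hnel : (Fin.rev (j + 1)).succ ≠ Fin.last (m+1) := by
        simp [Fin.ext_iff, Fin.val_rev, hval, h1]
        omega
      rw [Equiv.swap_apply_of_ne_of_ne hne0 hnel]
      simp [Fin.ext_iff, Fin.val_rev, hval, h1]
      omega

lemma sign_rev (n : ℕ) : Equiv.Perm.sign (Fin.revPerm : Equiv.Perm (Fin n))
    = (-1 : ℤˣ) ^ (n * (n - 1) / 2) := by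
  induction n with
  | zero => simp [Subsingleton.elim (Fin.revPerm : Equiv.Perm (Fin 0)) 1]
  | succ m ih =>
    match m, ih with
    | 0, _ => simp [Subsingleton.elim (Fin.revPerm : Equiv.Perm (Fin 1)) 1]
    | (k+1), ih =>
      rw [rev_decomp k, Equiv.Perm.decomposeFin.symm_sign, map_mul, ih, sign_finRotate]
      have hlast : (Fin.last (k+1) : Fin (k+2)) ≠ 0 := by simp [Fin.ext_iff]
      rw [if_neg hlast]
      have hexp : (k+1+1) * (k+1+1-1) / 2 = 1 + (k+1) * (k+1-1) / 2 + k := by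
        obtain ⟨c, hc⟩ := Nat.even_mul_succ_self k
        have e1 : (k+1+1) * (k+1+1-1) = c + c + 2*(k+1) := by
          simp only [Nat.add_sub_cancel]
          rw [show (k+1+1)*(k+1) = k*(k+1)+2*(k+1) from by ring, hc]
        have e2 : (k+1) * (k+1-1) = c + c := by
          simp only [Nat.add_sub_cancel]
          rw [show (k+1)*k = k*(k+1) from by ring, hc]
        rw [e1, e2]
        omega
      rw [hexp, pow_add, pow_add, pow_one]
      rw [mul_assoc]
      simp only [Nat.add_sub_cancel]

lemma q_eq {t : ℝ} (ht : 0 < t) (x z : ℝ) :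
    q t x z = 2 * gauss t z * Real.exp (-x ^ 2 / (2 * t)) * Real.sinh (x * z / t) := by
  unfold q gauss
  have h1 : -(z - x) ^ 2 / (2 * t) = -z ^ 2 / (2 * t) + (-x ^ 2 / (2 * t) + x * z / t) := by
    field_simp; ring
  have h2 : -(z + x) ^ 2 / (2 * t) = -z ^ 2 / (2 * t) + (-x ^ 2 / (2 * t) + -(x * z / t)) := by
    field_simp; ring
  rw [h1, h2, Real.exp_add, Real.exp_add, Real.exp_add, Real.exp_add, Real.sinh_eq,
    Real.exp_neg]
  field_simp

/-- Explicit evaluation of the Karlin–McGregor determinant from the starting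
configuration `ε • n̲` with `n̲ = (2n-1, 2n-3, …, 1)`. -/
theorem stmt6 (n : ℕ) (hn : 1 ≤ n) (t : ℝ) (ht : 0 < t) (ε : ℝ) (y : Fin n → ℝ) :
    Matrix.det (Matrix.of fun i j : Fin n => q t (ε * nvec n i) (y j)) =
      2 ^ (n ^ 2) * (∏ j, gauss t (y j)) *
        Real.exp (-ε ^ 2 * (∑ i, nvec n i ^ 2) / (2 * t)) *
        (∏ i, Real.sinh (ε * y i / t)) *
        ∏ j, ∏ k ∈ Finset.Ioi j,
          (Real.sinh (ε * y j / t) ^ 2 - Real.sinh (ε * y k / t) ^ 2) := by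
  -- Step 1: rewrite the entries
  have hM : (Matrix.of fun i j : Fin n => q t (ε * nvec n i) (y j))
      = Matrix.of (fun i j : Fin n => (2 * Real.exp (-(ε * nvec n i) ^ 2 / (2*t))) *
          Matrix.of (fun i j : Fin n => gauss t (y j) *
            Matrix.of (fun i j : Fin n => Real.sinh (nvec n i * (ε * y j / t))) i j) i j) := by
    ext i j
    simp only [Matrix.of_apply]
    rw [q_eq ht]
    have harg : ε * nvec n i * y j / t = nvec n i * (ε * y j / t) := by ring
    rw [harg]
    ring
  rw [hM, Matrix.det_mul_column, Matrix.det_mul_row]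
  -- Step 2: the determinant of the sinh matrix
  have hBV : (Matrix.of fun i j : Fin n => Real.sinh (nvec n i * (ε * y j / t)))
      = (Matrix.of fun i k : Fin n => cc (n - 1 - (i:ℕ)) (n - 1 - (k:ℕ))) *
        (Matrix.of fun k j : Fin n => Real.sinh (ε * y j / t) ^ (2 * (n - 1 - (k:ℕ)) + 1)) := by
    ext i j
    rw [Matrix.mul_apply]
    simp only [Matrix.of_apply]
    rw [Fin.sum_univ_eq_sum_range
      (fun k => cc (n-1-(i:ℕ)) (n-1-k) * Real.sinh (ε * y j / t) ^ (2*(n-1-k)+1)) n,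
      Finset.sum_range_reflect
        (fun r => cc (n-1-(i:ℕ)) r * Real.sinh (ε * y j / t) ^ (2*r+1)) n,
      sum_cc_ext _ n (by omega), ← sinh_odd]
    rfl
  have hB : (Matrix.of fun i k : Fin n => cc (n - 1 - (i:ℕ)) (n - 1 - (k:ℕ))).det
      = 4 ^ (∑ i ∈ Finset.range n, i) := by
    rw [Matrix.det_of_upperTriangular (by
      intro i k hik
      exact cc_eq_zero _ _ (by
        have h1 : (k:ℕ) < (i:ℕ) := hik
        have h2 : (i:ℕ) < n := i.isLt
        omega))]
    calc ∏ i : Fin n, cc (n-1-(i:ℕ)) (n-1-(i:ℕ)) = ∏ i : Fin n, (4:ℝ) ^ (n-1-(i:ℕ)) :=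
          Finset.prod_congr rfl fun i _ => cc_diag _
      _ = 4 ^ (∑ i : Fin n, (n-1-(i:ℕ))) := Finset.prod_pow_eq_pow_sum _ _ _
      _ = 4 ^ (∑ i ∈ Finset.range n, i) := by
          rw [Fin.sum_univ_eq_sum_range (fun i => n-1-i) n,
            Finset.sum_range_reflect (fun i => i) n]
  have hV : (Matrix.of fun k j : Fin n =>
        Real.sinh (ε * y j / t) ^ (2 * (n - 1 - (k:ℕ)) + 1)).det
      = ((Equiv.Perm.sign (Fin.revPerm : Equiv.Perm (Fin n)) : ℤ) : ℝ) *
        ((∏ j, Real.sinh (ε * y j / t)) *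
          ∏ i, ∏ j ∈ Finset.Ioi i, (Real.sinh (ε * y j / t) ^ 2 - Real.sinh (ε * y i / t) ^ 2)) := by
    have h1 : (Matrix.of fun k j : Fin n => Real.sinh (ε * y j / t) ^ (2 * (n - 1 - (k:ℕ)) + 1))
        = Matrix.of fun k j : Fin n => Real.sinh (ε * y j / t) *
            (((Matrix.vandermonde (fun j : Fin n => Real.sinh (ε * y j / t) ^ 2)).transpose).submatrix
              Fin.revPerm id) k j := by
      ext k j
      simp only [Matrix.of_apply, Matrix.submatrix_apply, Matrix.transpose_apply,
        Matrix.vandermonde_apply, Fin.revPerm_apply, Fin.val_rev, id]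
      rw [show n - ((k:ℕ)+1) = n - 1 - (k:ℕ) from by omega, ← pow_mul, pow_succ, mul_comm]
    rw [h1, Matrix.det_mul_row, Matrix.det_permute, Matrix.det_transpose,
      Matrix.det_vandermonde]
    ring
  rw [hBV, Matrix.det_mul, hB, hV, sign_rev]
  -- Step 3: the product of the row factors
  have hprod : ∏ i : Fin n, (2 * Real.exp (-(ε * nvec n i) ^ 2 / (2*t)))
      = 2 ^ n * Real.exp (-ε^2 * (∑ i, nvec n i ^ 2) / (2*t)) := by
    rw [Finset.prod_mul_distrib, Finset.prod_const, Finset.card_univ, Fintype.card_fin,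
      ← Real.exp_sum]
    refine congrArg (fun z => 2^n * Real.exp z) ?_
    calc ∑ i : Fin n, -(ε * nvec n i) ^ 2 / (2*t)
        = ∑ i : Fin n, (-ε^2 * nvec n i ^ 2) / (2*t) :=
          Finset.sum_congr rfl fun i _ => by ring
      _ = (-ε^2 * ∑ i, nvec n i ^ 2) / (2*t) := by
          rw [← Finset.sum_div, ← Finset.mul_sum]
  rw [hprod]
  -- Step 4: flip the ordered product
  have htarget : (∏ j : Fin n, ∏ k ∈ Finset.Ioi j,
        (Real.sinh (ε * y j / t) ^ 2 - Real.sinh (ε * y k / t) ^ 2))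
      = (-1:ℝ) ^ (∑ i ∈ Finset.range n, i) *
        ∏ i : Fin n, ∏ j ∈ Finset.Ioi i,
          (Real.sinh (ε * y j / t) ^ 2 - Real.sinh (ε * y i / t) ^ 2) := by
    calc (∏ j : Fin n, ∏ k ∈ Finset.Ioi j,
          (Real.sinh (ε * y j / t) ^ 2 - Real.sinh (ε * y k / t) ^ 2))
        = ∏ j : Fin n, ((-1:ℝ) ^ (Finset.Ioi j).card * ∏ k ∈ Finset.Ioi j,
            (Real.sinh (ε * y k / t) ^ 2 - Real.sinh (ε * y j / t) ^ 2)) := by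
          refine Finset.prod_congr rfl fun j _ => ?_
          rw [← Finset.prod_const, ← Finset.prod_mul_distrib]
          exact Finset.prod_congr rfl fun k _ => by ring
      _ = (∏ j : Fin n, (-1:ℝ) ^ (Finset.Ioi j).card) * ∏ i : Fin n, ∏ j ∈ Finset.Ioi i,
            (Real.sinh (ε * y j / t) ^ 2 - Real.sinh (ε * y i / t) ^ 2) :=
          Finset.prod_mul_distrib
      _ = (-1:ℝ) ^ (∑ i ∈ Finset.range n, i) * _ := by
          congr 1
          rw [Finset.prod_pow_eq_pow_sum]
          congr 1
          calc ∑ j : Fin n, (Finset.Ioi j).card = ∑ j : Fin n, (n - 1 - (j:ℕ)) :=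
                Finset.sum_congr rfl fun j _ => Fin.card_Ioi j
            _ = ∑ i ∈ Finset.range n, i := by
                rw [Fin.sum_univ_eq_sum_range (fun i => n-1-i) n,
                  Finset.sum_range_reflect (fun i => i) n]
  rw [htarget]
  -- Step 5: numerics
  have hsign : (((((-1 : ℤˣ) ^ (n * (n-1) / 2) : ℤˣ) : ℤ)) : ℝ)
      = (-1:ℝ) ^ (∑ i ∈ Finset.range n, i) := by
    rw [Finset.sum_range_id]
    push_cast
    norm_num
  have h24 : (2:ℝ) ^ n * 4 ^ (∑ i ∈ Finset.range n, i) = 2 ^ (n^2) := by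
    rw [show (4:ℝ) = 2^2 from by norm_num, ← pow_mul, ← pow_add]
    congr 1
    have h2K : (∑ i ∈ Finset.range n, i) * 2 = n * (n-1) := Finset.sum_range_id_mul_two n
    obtain ⟨m, rfl⟩ : ∃ m, n = m + 1 := ⟨n-1, by omega⟩
    have e1 : (m+1) * (m+1-1) = m*m + m := by simp only [Nat.add_sub_cancel]; ring
    have e2 : (m+1)^2 = m*m + 2*m + 1 := by ring
    omega
  rw [← h24, hsign]
  ring
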